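/- A Hermitian block-matrix M with r×r blocks is block diagonally dominant (for all i, M_{i,i} ⪰ I_r · Σ_{j≠i} ‖M_{i,j}‖) if and only if M can be written as D - A where D is block-diagonal, A is Hermitian, and for all i, D_{i,i} ⪰ I_r · Σ_j ‖A_{i,j}‖. -/

import Mathlib

open Matrix Finset
open scoped ComplexOrder

/-- The `ℓ²` operator norm of a square complex matrix. -/
noncomputable def matOpNorm {r : ℕ} (A : Matrix (Fin r) (Fin r) ℂ) : ℝ :=
  ‖(Matrix.toEuclideanCLM (𝕜 := ℂ) A : EuclideanSpace ℂ (Fin r) →L[ℂ] EuclideanSpace ℂ (Fin r))‖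

/-- A Hermitian block matrix (given by its `r × r` blocks) is block diagonally dominant
if for every `i`, `M i i ⪰ (∑_{j ≠ i} ‖M i j‖) · I`. -/
def IsBDD {n r : ℕ} (M : Fin n → Fin n → Matrix (Fin r) (Fin r) ℂ) : Prop :=
  ∀ i, (M i i - (∑ j ∈ Finset.univ.erase i, matOpNorm (M i j)) •
      (1 : Matrix (Fin r) (Fin r) ℂ)).PosSemidef


lemma matOpNorm_neg {r : ℕ} (A : Matrix (Fin r) (Fin r) ℂ) : matOpNorm (-A) = matOpNorm A := by
  rw [matOpNorm, matOpNorm, map_neg, norm_neg]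

lemma matOpNorm_zero {r : ℕ} : matOpNorm (0 : Matrix (Fin r) (Fin r) ℂ) = 0 := by
  rw [matOpNorm, map_zero, norm_zero]

lemma key_psd {r : ℕ} (B : Matrix (Fin r) (Fin r) ℂ) (hB : Bᴴ = B) :
    ((matOpNorm B) • (1 : Matrix (Fin r) (Fin r) ℂ) - B).PosSemidef := by
  rw [Matrix.posSemidef_iff_dotProduct_mulVec]
  constructor
  · unfold Matrix.IsHermitian
    simp [conjTranspose_sub, conjTranspose_smul, hB]
  · intro x
    set y : EuclideanSpace ℂ (Fin r) := (WithLp.equiv 2 (Fin r → ℂ)).symm x with hy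
    set T := (toEuclideanCLM (𝕜 := ℂ) B) with hT
    have hinner : star x ⬝ᵥ (B *ᵥ x) = inner ℂ y (T y) := by
      rw [EuclideanSpace.inner_eq_star_dotProduct, dotProduct_comm]
      simp [hy, hT, toLin'_apply]
    have hxx : star x ⬝ᵥ x = ((‖y‖ : ℂ) ^ 2) := by
      have h2 := inner_self_eq_norm_sq_to_K (𝕜 := ℂ) y
      rw [EuclideanSpace.inner_eq_star_dotProduct, dotProduct_comm] at h2
      simpa [hy] using h2
    have hre : (inner ℂ y (T y) : ℂ).re ≤ matOpNorm B * ‖y‖ ^ 2 := by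
      have h1 : matOpNorm B = ‖T‖ := rfl
      rw [h1]
      calc (inner ℂ y (T y) : ℂ).re ≤ ‖(inner ℂ y (T y) : ℂ)‖ := Complex.re_le_norm _
        _ ≤ ‖y‖ * ‖T y‖ := norm_inner_le_norm _ _
        _ ≤ ‖y‖ * (‖T‖ * ‖y‖) :=
            mul_le_mul_of_nonneg_left (T.le_opNorm y) (norm_nonneg y)
        _ = ‖T‖ * ‖y‖ ^ 2 := by ring
    have hTsa : ContinuousLinearMap.adjoint T = T := by
      have hstar : star T = T := by
        rw [hT, ← map_star, Matrix.star_eq_conjTranspose, hB]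
      rw [← ContinuousLinearMap.star_eq_adjoint, hstar]
    have him : (inner ℂ y (T y) : ℂ).im = 0 := by
      have hconj : (starRingEnd ℂ) (inner ℂ y (T y) : ℂ) = inner ℂ y (T y) := by
        have h1 : (starRingEnd ℂ) (inner ℂ y (T y) : ℂ) = inner ℂ (T y) y := inner_conj_symm _ _
        rw [h1]
        conv_lhs => rw [← hTsa]
        exact ContinuousLinearMap.adjoint_inner_left T y y
      exact Complex.conj_eq_iff_im.mp hconj
    have hval : star x ⬝ᵥ ((matOpNorm B • (1 : Matrix (Fin r) (Fin r) ℂ) - B) *ᵥ x)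
        = ((matOpNorm B * ‖y‖ ^ 2 : ℝ) : ℂ) - inner ℂ y (T y) := by
      rw [Matrix.sub_mulVec, dotProduct_sub, Matrix.smul_mulVec, Matrix.one_mulVec,
        dotProduct_smul, hxx, hinner, Complex.real_smul]
      push_cast
      ring
    rw [hval, Complex.nonneg_iff]
    refine ⟨?_, by simp only [Complex.sub_im, Complex.ofReal_im, him, zero_sub, neg_zero]⟩
    simp only [Complex.sub_re, Complex.ofReal_re]
    linarith

/-- Flatten a block matrix into an ordinary matrix. -/
def flatten {n r : ℕ} (M : Fin n → Fin n → Matrix (Fin r) (Fin r) ℂ) :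
    Matrix (Fin n × Fin r) (Fin n × Fin r) ℂ :=
  Matrix.of fun p q => M p.1 q.1 p.2 q.2

/-- A Hermitian block matrix `M` is block diagonally dominant iff it can be written as
`D - A` with `D` block diagonal, `A` Hermitian, and `D i ⪰ (∑_j ‖A i j‖) · I` for all `i`. -/
theorem stmt_6 {n r : ℕ} (M : Fin n → Fin n → Matrix (Fin r) (Fin r) ℂ)
    (hHerm : ∀ i j, (M i j)ᴴ = M j i) :
    IsBDD M ↔
      ∃ (D : Fin n → Matrix (Fin r) (Fin r) ℂ)
        (A : Fin n → Fin n → Matrix (Fin r) (Fin r) ℂ),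
        (∀ i j, (A i j)ᴴ = A j i) ∧
        (∀ i, M i i = D i - A i i) ∧
        (∀ i j, i ≠ j → M i j = - A i j) ∧
        (∀ i, (D i - (∑ j, matOpNorm (A i j)) • (1 : Matrix (Fin r) (Fin r) ℂ)).PosSemidef) := by
  constructor
  · intro hbdd
    refine ⟨fun i => M i i, fun i j => if h : i = j then 0 else -(M i j), ?_, ?_, ?_, ?_⟩
    · intro i j
      by_cases h : i = j
      · subst h; simp
      · simp [h, Ne.symm h, hHerm]
    · intro i; simp
    · intro i j h; simp [h]
    · intro i
      have hsum : ∑ j, matOpNorm (if h : i = j then 0 else -(M i j))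
          = ∑ j ∈ Finset.univ.erase i, matOpNorm (M i j) := by
        rw [← Finset.sum_erase_add Finset.univ
          (fun j => matOpNorm (if h : i = j then 0 else -(M i j))) (Finset.mem_univ i)]
        have hz : matOpNorm (if h : i = i then 0 else -(M i i)) = 0 := by
          rw [dif_pos rfl, matOpNorm_zero]
        rw [hz, add_zero]
        refine Finset.sum_congr rfl fun j hj => ?_
        rw [dif_neg (Ne.symm (Finset.ne_of_mem_erase hj)), matOpNorm_neg]
      rw [hsum]
      exact hbdd i
  · rintro ⟨D, A, hAherm, hDiag, hOff, hDom⟩ i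
    have hkey := key_psd (A i i) (hAherm i i)
    have hsum : ∑ j ∈ Finset.univ.erase i, matOpNorm (M i j)
        = (∑ j, matOpNorm (A i j)) - matOpNorm (A i i) := by
      have h0 : ∑ j ∈ Finset.univ.erase i, matOpNorm (A i j) + matOpNorm (A i i)
          = ∑ j, matOpNorm (A i j) :=
        Finset.sum_erase_add Finset.univ (fun j => matOpNorm (A i j)) (Finset.mem_univ i)
      have h1 : ∑ j ∈ Finset.univ.erase i, matOpNorm (M i j)
          = ∑ j ∈ Finset.univ.erase i, matOpNorm (A i j) := by
        refine Finset.sum_congr rfl fun j hj => ?_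
        rw [hOff i j (Ne.symm (Finset.ne_of_mem_erase hj)), matOpNorm_neg]
      rw [h1]
      linarith
    have hdecomp : M i i - (∑ j ∈ Finset.univ.erase i, matOpNorm (M i j)) •
        (1 : Matrix (Fin r) (Fin r) ℂ)
        = (D i - (∑ j, matOpNorm (A i j)) • (1 : Matrix (Fin r) (Fin r) ℂ))
          + ((matOpNorm (A i i)) • (1 : Matrix (Fin r) (Fin r) ℂ) - A i i) := by
      rw [hDiag i, hsum, sub_smul]
      abel
    rw [hdecomp]
    exact (hDom i).add hkey
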